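/- Let V = {(x_1,…,x_n) ∈ ℂ^n : x_1 + ⋯ + x_n = 0} be the reflection representation of S_n inside the permutation representation ℂ^n. Then the sets of Lie elements coincide: Lie(ℂ^n) = Lie(V), i.e. x ∈ ℂ[S_n] satisfies Grp_m(x) = Alg_m(x) on Λ^m ℂ^n for all m ≤ n if and only if it satisfies the analogous conditions on Λ^m V for all m ≤ n−1. -/

import Mathlib

open ExteriorAlgebra

variable (k : Type*) [Field k] {G : Type*} [Group G]
variable {V : Type*} [AddCommGroup V] [Module k V]

/-- The alternating map `v ↦ Σ_p v_1 ∧ … ∧ f(v_p) ∧ … ∧ v_m`, landing in the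
exterior algebra. -/
noncomputable def algAlt (f : Module.End k V) (m : ℕ) :
    V [⋀^Fin m]→ₗ[k] ExteriorAlgebra k V where
  toMultilinearMap :=
    ∑ p : Fin m, (ιMulti k m).toMultilinearMap.compLinearMap
      (Function.update (fun _ : Fin m => (LinearMap.id : V →ₗ[k] V)) p f)
  map_eq_zero_of_eq' := by
    intro v i j hv hij
    show (∑ p : Fin m, (ιMulti k m).toMultilinearMap.compLinearMap
      (Function.update (fun _ : Fin m => (LinearMap.id : V →ₗ[k] V)) p f)) v = 0
    have key : ∀ p : Fin m,
        ((ιMulti k m).toMultilinearMap.compLinearMap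
          (Function.update (fun _ : Fin m => (LinearMap.id : V →ₗ[k] V)) p f)) v
        = ιMulti k m (Function.update v p (f (v p))) := by
      intro p
      have harg : (fun x => (Function.update (fun _ : Fin m => (LinearMap.id : V →ₗ[k] V)) p f x) (v x))
          = Function.update v p (f (v p)) := by
        funext x
        rcases eq_or_ne x p with rfl | hx
        · simp
        · simp [Function.update_of_ne hx]
      rw [MultilinearMap.compLinearMap_apply, harg]
      rfl
    rw [MultilinearMap.sum_apply]
    calc (∑ p : Fin m, ((ιMulti k m).toMultilinearMap.compLinearMap
          (Function.update (fun _ : Fin m => (LinearMap.id : V →ₗ[k] V)) p f)) v)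
        = ∑ p ∈ ({i, j} : Finset (Fin m)), ιMulti k m (Function.update v p (f (v p))) := by
          rw [Finset.sum_congr rfl (fun p _ => key p)]
          refine (Finset.sum_subset (Finset.subset_univ _) ?_).symm
          intro p _ hp
          simp only [Finset.mem_insert, Finset.mem_singleton, not_or] at hp
          exact AlternatingMap.map_eq_zero_of_eq _ _
            (by rw [Function.update_of_ne (Ne.symm ?_), Function.update_of_ne (Ne.symm ?_), hv]
                exacts [hp.2, hp.1]) hij
      _ = 0 := by
          rw [Finset.sum_pair hij]
          have hcomp : Function.update v j (f (v j))
              = (Function.update v i (f (v i))) ∘ Equiv.swap i j := by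
            funext x
            rcases eq_or_ne x i with rfl | hxi
            · show Function.update v j (f (v j)) x = Function.update v x (f (v x)) (Equiv.swap x j x)
              rw [Function.update_of_ne hij, Equiv.swap_apply_left,
                Function.update_of_ne (Ne.symm hij)]
              exact hv
            rcases eq_or_ne x j with rfl | hxj
            · show Function.update v x (f (v x)) x = Function.update v i (f (v i)) (Equiv.swap i x x)
              rw [Function.update_self, Equiv.swap_apply_right, Function.update_self, hv]
            · show Function.update v j (f (v j)) x = Function.update v i (f (v i)) (Equiv.swap i j x)
              rw [Function.update_of_ne hxj, Equiv.swap_apply_of_ne_of_ne hxi hxj,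
                Function.update_of_ne hxi]
          rw [hcomp, AlternatingMap.map_swap _ _ hij, add_neg_cancel]

/-- The derivation `D_f` on the exterior algebra extending `f : V → V`. -/
noncomputable def derOp (f : Module.End k V) :
    ExteriorAlgebra k V →ₗ[k] ExteriorAlgebra k V :=
  ExteriorAlgebra.liftAlternating (fun m => algAlt k f m)

theorem derOp_mem (f : Module.End k V) (m : ℕ) :
    ∀ x ∈ ⋀[k]^m V, derOp k f x ∈ ⋀[k]^m V := by
  intro x hx
  rw [← ExteriorAlgebra.ιMulti_span_fixedDegree] at hx ⊢
  induction hx using Submodule.span_induction with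
  | mem x hx =>
      obtain ⟨v, rfl⟩ := hx
      rw [derOp, ExteriorAlgebra.liftAlternating_apply_ιMulti]
      show (∑ p : Fin m, (ιMulti k m).toMultilinearMap.compLinearMap
        (Function.update (fun _ : Fin m => (LinearMap.id : V →ₗ[k] V)) p f)) v ∈ _
      rw [MultilinearMap.sum_apply]
      refine Submodule.sum_mem _ fun p _ => Submodule.subset_span ⟨_, rfl⟩
  | zero => simp
  | add x y _ _ hx hy => rw [map_add]; exact Submodule.add_mem _ hx hy
  | smul c x _ hx => rw [map_smul]; exact Submodule.smul_mem _ c hx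

theorem mapOp_mem (f : Module.End k V) (m : ℕ) :
    ∀ x ∈ ⋀[k]^m V, (ExteriorAlgebra.map f) x ∈ ⋀[k]^m V := by
  intro x hx
  rw [← ExteriorAlgebra.ιMulti_span_fixedDegree] at hx ⊢
  induction hx using Submodule.span_induction with
  | mem x hx =>
      obtain ⟨v, rfl⟩ := hx
      rw [ExteriorAlgebra.map_apply_ιMulti]
      exact Submodule.subset_span ⟨_, rfl⟩
  | zero => simp
  | add x y _ _ hx hy => rw [map_add]; exact Submodule.add_mem _ hx hy
  | smul c x _ hx => rw [map_smul]; exact Submodule.smul_mem _ c hx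

/-- `Grp_m : k[G] → End(Λ^m V)`, the linear extension of `g ↦ (v₁∧…∧vₘ ↦ g v₁∧…∧g vₘ)`. -/
noncomputable def GrpOp (ρ : Representation k G V) (m : ℕ) :
    MonoidAlgebra k G →ₗ[k] Module.End k (⋀[k]^m V) :=
  Finsupp.lift (Module.End k (⋀[k]^m V)) k G
    (fun g => ((ExteriorAlgebra.map (ρ g)).toLinearMap).restrict (mapOp_mem k (ρ g) m))
    ∘ₗ (MonoidAlgebra.coeffLinearEquiv k).toLinearMap

/-- `Alg_m : k[G] → End(Λ^m V)`, the linear extension of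
`g ↦ (v₁∧…∧vₘ ↦ Σ_p v₁∧…∧g vₚ∧…∧vₘ)`. -/
noncomputable def AlgOp (ρ : Representation k G V) (m : ℕ) :
    MonoidAlgebra k G →ₗ[k] Module.End k (⋀[k]^m V) :=
  Finsupp.lift (Module.End k (⋀[k]^m V)) k G
    (fun g => (derOp k (ρ g)).restrict (derOp_mem k (ρ g) m))
    ∘ₗ (MonoidAlgebra.coeffLinearEquiv k).toLinearMap

/-- `x ∈ k[G]` is a Lie element for the representation `ρ` if `Grp_m x = Alg_m x`
for all `m = 0, 1, …, dim V`. -/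
def IsLieElement (ρ : Representation k G V) (x : MonoidAlgebra k G) : Prop :=
  ∀ m ≤ Module.finrank k V, GrpOp k ρ m x = AlgOp k ρ m x

section Aux

open ExteriorAlgebra in
/-- The operator `Grp(x)` on the full exterior algebra. -/
noncomputable def bigG (ρ : Representation k G V) :
    MonoidAlgebra k G →ₗ[k] (ExteriorAlgebra k V →ₗ[k] ExteriorAlgebra k V) :=
  (Finsupp.lift _ k G fun g => (ExteriorAlgebra.map (ρ g)).toLinearMap)
    ∘ₗ (MonoidAlgebra.coeffLinearEquiv k).toLinearMap

/-- The operator `Alg(x)` on the full exterior algebra. -/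
noncomputable def bigD (ρ : Representation k G V) :
    MonoidAlgebra k G →ₗ[k] (ExteriorAlgebra k V →ₗ[k] ExteriorAlgebra k V) :=
  (Finsupp.lift _ k G fun g => derOp k (ρ g))
    ∘ₗ (MonoidAlgebra.coeffLinearEquiv k).toLinearMap

theorem bigG_apply (ρ : Representation k G V) (x : MonoidAlgebra k G) (z : ExteriorAlgebra k V) :
    bigG k ρ x z = Finsupp.sum x.coeff fun g a => a • ExteriorAlgebra.map (ρ g) z := by
  rw [bigG, LinearMap.comp_apply]; erw [Finsupp.lift_apply]
  simp [Finsupp.sum, LinearMap.sum_apply]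

theorem bigD_apply (ρ : Representation k G V) (x : MonoidAlgebra k G) (z : ExteriorAlgebra k V) :
    bigD k ρ x z = Finsupp.sum x.coeff fun g a => a • derOp k (ρ g) z := by
  rw [bigD, LinearMap.comp_apply]; erw [Finsupp.lift_apply]
  simp [Finsupp.sum, LinearMap.sum_apply]

theorem GrpOp_coe (ρ : Representation k G V) (m : ℕ) (x : MonoidAlgebra k G)
    (z : ExteriorAlgebra k V) (hz : z ∈ ⋀[k]^m V) :
    ((GrpOp k ρ m x ⟨z, hz⟩ : ⋀[k]^m V) : ExteriorAlgebra k V) = bigG k ρ x z := by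
  rw [GrpOp, LinearMap.comp_apply]; erw [Finsupp.lift_apply]; rw [bigG_apply]
  simp [Finsupp.sum, LinearMap.sum_apply, LinearMap.restrict_coe_apply]
  rfl

theorem AlgOp_coe (ρ : Representation k G V) (m : ℕ) (x : MonoidAlgebra k G)
    (z : ExteriorAlgebra k V) (hz : z ∈ ⋀[k]^m V) :
    ((AlgOp k ρ m x ⟨z, hz⟩ : ⋀[k]^m V) : ExteriorAlgebra k V) = bigD k ρ x z := by
  rw [AlgOp, LinearMap.comp_apply]; erw [Finsupp.lift_apply]; rw [bigD_apply]
  simp [Finsupp.sum, LinearMap.sum_apply, LinearMap.restrict_coe_apply]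

theorem cond_iff (ρ : Representation k G V) (m : ℕ) (x : MonoidAlgebra k G) :
    GrpOp k ρ m x = AlgOp k ρ m x ↔
      ∀ z ∈ ⋀[k]^m V, bigG k ρ x z = bigD k ρ x z := by
  constructor
  · intro h z hz
    have h2 : ((GrpOp k ρ m x ⟨z, hz⟩ : ⋀[k]^m V) : ExteriorAlgebra k V)
        = ((AlgOp k ρ m x ⟨z, hz⟩ : ⋀[k]^m V) : ExteriorAlgebra k V) := by rw [h]
    rwa [GrpOp_coe, AlgOp_coe] at h2
  · intro h
    refine LinearMap.ext fun z => Subtype.ext ?_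
    rcases z with ⟨z, hz⟩
    rw [GrpOp_coe, AlgOp_coe]
    exact h z hz

theorem derOp_ιMulti (f : Module.End k V) (m : ℕ) (v : Fin m → V) :
    derOp k f (ExteriorAlgebra.ιMulti k m v)
      = ∑ p : Fin m, ExteriorAlgebra.ιMulti k m (Function.update v p (f (v p))) := by
  rw [derOp, ExteriorAlgebra.liftAlternating_apply_ιMulti]
  show (∑ p : Fin m, (ιMulti k m).toMultilinearMap.compLinearMap
      (Function.update (fun _ : Fin m => (LinearMap.id : V →ₗ[k] V)) p f)) v = _
  rw [MultilinearMap.sum_apply]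
  refine Finset.sum_congr rfl fun p _ => ?_
  have harg : (fun x => (Function.update (fun _ : Fin m => (LinearMap.id : V →ₗ[k] V)) p f x) (v x))
      = Function.update v p (f (v p)) := by
    funext y
    rcases eq_or_ne y p with rfl | hx
    · simp
    · simp [Function.update_of_ne hx]
  rw [MultilinearMap.compLinearMap_apply, harg]
  rfl

theorem bigG_ιMulti (ρ : Representation k G V) (x : MonoidAlgebra k G) (m : ℕ) (v : Fin m → V) :
    bigG k ρ x (ExteriorAlgebra.ιMulti k m v)
      = Finsupp.sum x.coeff fun g a => a • ExteriorAlgebra.ιMulti k m (⇑(ρ g) ∘ v) := by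
  simp [bigG_apply, ExteriorAlgebra.map_apply_ιMulti]

theorem bigD_ιMulti (ρ : Representation k G V) (x : MonoidAlgebra k G) (m : ℕ) (v : Fin m → V) :
    bigD k ρ x (ExteriorAlgebra.ιMulti k m v)
      = Finsupp.sum x.coeff fun g a =>
          a • ∑ p : Fin m, ExteriorAlgebra.ιMulti k m (Function.update v p (ρ g (v p))) := by
  simp [bigD_apply, derOp_ιMulti]

theorem ιMulti_mem (m : ℕ) (v : Fin m → V) :
    ExteriorAlgebra.ιMulti k m v ∈ ⋀[k]^m V := by
  rw [← ExteriorAlgebra.ιMulti_span_fixedDegree]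
  exact Submodule.subset_span ⟨v, rfl⟩

theorem bigG_degZero (ρ : Representation k G V) (x : MonoidAlgebra k G) (v : Fin 0 → V) :
    bigG k ρ x (ExteriorAlgebra.ιMulti k 0 v)
      = (Finsupp.sum x.coeff fun _ a => a) • ExteriorAlgebra.ιMulti k 0 v := by
  rw [bigG_ιMulti, Finsupp.sum, Finsupp.sum, Finset.sum_smul]
  refine Finset.sum_congr rfl fun g _ => ?_
  have hv : ⇑(ρ g) ∘ v = v := funext fun i => i.elim0
  rw [hv]

theorem bigD_degZero (ρ : Representation k G V) (x : MonoidAlgebra k G) (v : Fin 0 → V) :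
    bigD k ρ x (ExteriorAlgebra.ιMulti k 0 v) = 0 := by
  rw [bigD_ιMulti]
  simp

theorem cond_zero_iff (ρ : Representation k G V) (x : MonoidAlgebra k G) :
    GrpOp k ρ 0 x = AlgOp k ρ 0 x ↔ (Finsupp.sum x.coeff fun _ a => a) = 0 := by
  rw [cond_iff]
  constructor
  · intro h
    have h1 := h (ExteriorAlgebra.ιMulti k 0 (fun _ => 0)) (ιMulti_mem k 0 _)
    rw [bigG_degZero, bigD_degZero] at h1
    have h2 : ExteriorAlgebra.ιMulti k 0 (fun _ : Fin 0 => (0 : V)) ≠ 0 := by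
      have : ExteriorAlgebra.ιMulti k 0 (fun _ : Fin 0 => (0 : V)) = 1 := by
        simp [ExteriorAlgebra.ιMulti_apply]
      rw [this]
      exact one_ne_zero
    exact (smul_eq_zero.mp h1).resolve_right h2
  · intro hs z hz
    rw [← ExteriorAlgebra.ιMulti_span_fixedDegree] at hz
    induction hz using Submodule.span_induction with
    | mem z hzm =>
        obtain ⟨v, rfl⟩ := hzm
        rw [bigG_degZero, bigD_degZero, hs, zero_smul]
    | zero => simp
    | add a b _ _ ha hb => rw [map_add, map_add, ha, hb]
    | smul c a _ ha => rw [map_smul, map_smul, ha]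

end Aux
/-- The permutation representation of `S_n` on `ℂ^n`: `σ` sends the basis vector `v_p`
to `v_{σ(p)}`, i.e. `(σ·x) i = x (σ⁻¹ i)`. -/
noncomputable def permRep (n : ℕ) : Representation ℂ (Equiv.Perm (Fin n)) (Fin n → ℂ) where
  toFun σ := LinearMap.funLeft ℂ ℂ ⇑σ⁻¹
  map_one' := by
    ext v i
    simp
  map_mul' σ τ := by
    refine LinearMap.ext fun v => funext fun i => ?_
    simp [LinearMap.funLeft_apply, Equiv.Perm.mul_apply, mul_inv_rev, Module.End.mul_apply]

/-- The sum-zero hyperplane `V = {x ∈ ℂ^n : Σ_i x_i = 0}`, the reflection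
representation of `S_n` inside the permutation representation. -/
noncomputable def sumZero (n : ℕ) : Submodule ℂ (Fin n → ℂ) where
  carrier := {x | ∑ i, x i = 0}
  add_mem' := by
    intro a b ha hb
    simp only [Set.mem_setOf_eq, Pi.add_apply, Finset.sum_add_distrib] at *
    rw [ha, hb, add_zero]
  zero_mem' := by simp
  smul_mem' := by
    intro c x hx
    simp only [Set.mem_setOf_eq, Pi.smul_apply, smul_eq_mul, ← Finset.mul_sum] at *
    rw [hx, mul_zero]

theorem permRep_mem_sumZero {n : ℕ} (σ : Equiv.Perm (Fin n)) :
    ∀ x ∈ sumZero n, permRep n σ x ∈ sumZero n := by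
  intro x hx
  show ∑ i, x (σ⁻¹ i) = 0
  rw [Equiv.sum_comp σ⁻¹ x]
  exact hx

/-- The reflection representation of `S_n` on the sum-zero hyperplane. -/
noncomputable def reflRep (n : ℕ) :
    Representation ℂ (Equiv.Perm (Fin n)) (sumZero n) where
  toFun σ := (permRep n σ).restrict (permRep_mem_sumZero σ)
  map_one' := by
    ext x
    simp [permRep, Equiv.Perm.one_symm] <;> rfl
  map_mul' σ τ := by
    refine LinearMap.ext fun x => Subtype.ext ?_
    show permRep n (σ * τ) ↑x = permRep n σ (permRep n τ ↑x)
    rw [map_mul]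
    rfl

set_option synthInstance.maxHeartbeats 1000000
set_option maxHeartbeats 1000000
section AuxN

open ExteriorAlgebra

variable (n : ℕ)

/-- The all-ones vector. -/
noncomputable def allOnes : Fin n → ℂ := fun _ => 1

theorem permRep_allOnes (σ : Equiv.Perm (Fin n)) : permRep n σ (allOnes n) = allOnes n := rfl

theorem mem_sumZero (z : Fin n → ℂ) : z ∈ sumZero n ↔ ∑ i, z i = 0 := Iff.rfl

theorem reflRep_coe (σ : Equiv.Perm (Fin n)) (v : sumZero n) :
    ((reflRep n σ v : sumZero n) : Fin n → ℂ) = permRep n σ (v : Fin n → ℂ) := rfl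

/-- Embedding of the exterior algebra of `V` into that of `ℂ^n`. -/
noncomputable def inclMap : ExteriorAlgebra ℂ (sumZero n) →ₗ[ℂ] ExteriorAlgebra ℂ (Fin n → ℂ) :=
  (ExteriorAlgebra.map (sumZero n).subtype).toLinearMap

theorem inclMap_ιMulti {m : ℕ} (u : Fin m → sumZero n) :
    inclMap n (ιMulti ℂ m u) = ιMulti ℂ m (fun i => (u i : Fin n → ℂ)) :=
  ExteriorAlgebra.map_apply_ιMulti _ u

theorem inclMap_inj : Function.Injective (inclMap n) := by
  obtain ⟨g, hg⟩ := LinearMap.exists_leftInverse_of_injective (sumZero n).subtype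
    ((sumZero n).ker_subtype)
  have h : (ExteriorAlgebra.map g).comp (ExteriorAlgebra.map (sumZero n).subtype)
      = AlgHom.id ℂ _ := by
    rw [ExteriorAlgebra.map_comp_map, hg, ExteriorAlgebra.map_id]
  have ha : ∀ z, ExteriorAlgebra.map g (inclMap n z) = z := fun z => by
    exact AlgHom.congr_fun h z
  intro a b hab
  rw [← ha a, ← ha b, hab]

/-- Wedging with the all-ones vector, as a map `Λ V → Λ ℂ^n`. -/
noncomputable def consLift : ExteriorAlgebra ℂ (sumZero n) →ₗ[ℂ] ExteriorAlgebra ℂ (Fin n → ℂ) :=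
  ExteriorAlgebra.liftAlternating fun m =>
    ((ιMulti ℂ (m + 1)).curryLeft (allOnes n)).compLinearMap (sumZero n).subtype

theorem consLift_ιMulti {m : ℕ} (u : Fin m → sumZero n) :
    consLift n (ιMulti ℂ m u)
      = ιMulti ℂ (m + 1) (Fin.cons (allOnes n) (fun i => (u i : Fin n → ℂ))) := by
  rw [consLift, ExteriorAlgebra.liftAlternating_apply_ιMulti]
  rfl

theorem coe_update {m : ℕ} (u : Fin m → sumZero n) (p : Fin m) (y : sumZero n) :
    (fun i => ((Function.update u p y i : sumZero n) : Fin n → ℂ))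
      = Function.update (fun i => ((u i : sumZero n) : Fin n → ℂ)) p (y : Fin n → ℂ) := by
  funext i
  rcases eq_or_ne i p with rfl | h
  · simp
  · simp [Function.update_of_ne h]

theorem bigG_incl (x : MonoidAlgebra ℂ (Equiv.Perm (Fin n))) {m : ℕ} (u : Fin m → sumZero n) :
    bigG ℂ (permRep n) x (ιMulti ℂ m fun i => (u i : Fin n → ℂ))
      = inclMap n (bigG ℂ (reflRep n) x (ιMulti ℂ m u)) := by
  rw [bigG_ιMulti, bigG_ιMulti, map_finsuppSum]
  refine Finsupp.sum_congr fun g _ => ?_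
  rw [map_smul, inclMap_ιMulti]
  congr 1

theorem bigD_incl (x : MonoidAlgebra ℂ (Equiv.Perm (Fin n))) {m : ℕ} (u : Fin m → sumZero n) :
    bigD ℂ (permRep n) x (ιMulti ℂ m fun i => (u i : Fin n → ℂ))
      = inclMap n (bigD ℂ (reflRep n) x (ιMulti ℂ m u)) := by
  rw [bigD_ιMulti, bigD_ιMulti, map_finsuppSum]
  refine Finsupp.sum_congr fun g _ => ?_
  rw [map_smul, map_sum]
  congr 1
  refine Finset.sum_congr rfl fun p _ => ?_
  rw [inclMap_ιMulti, coe_update]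
  rfl

theorem finrank_sumZero (hn : 1 ≤ n) : Module.finrank ℂ (sumZero n) + 1 = n := by
  set φ : Module.Dual ℂ (Fin n → ℂ) := ∑ i, LinearMap.proj i with hφ
  have hker : sumZero n = LinearMap.ker φ := by
    ext z
    rw [mem_sumZero, LinearMap.mem_ker, hφ]
    simp [LinearMap.sum_apply]
  have hφ0 : φ ≠ 0 := by
    intro h0
    have h1 : φ (Pi.single (⟨0, hn⟩ : Fin n) 1) = 1 := by
      rw [hφ]
      simp [LinearMap.sum_apply, Pi.single_apply]
    rw [h0] at h1
    simp at h1
  rw [hker, Module.Dual.finrank_ker_add_one_of_ne_zero hφ0, Module.finrank_fin_fun]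

theorem ιMulti_top_deg (hn : 1 ≤ n) {m : ℕ} (hm : n ≤ m) (u : Fin m → sumZero n) :
    ιMulti ℂ m u = 0 := by
  refine (ιMulti ℂ m).map_linearDependent u fun hli => ?_
  have h1 := hli.fintype_card_le_finrank
  rw [Fintype.card_fin] at h1
  have h2 := finrank_sumZero n hn
  omega

theorem bigG_cons (x : MonoidAlgebra ℂ (Equiv.Perm (Fin n))) {m : ℕ} (u : Fin m → sumZero n) :
    bigG ℂ (permRep n) x (ιMulti ℂ (m + 1) (Fin.cons (allOnes n) fun i => (u i : Fin n → ℂ)))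
      = consLift n (bigG ℂ (reflRep n) x (ιMulti ℂ m u)) := by
  rw [bigG_ιMulti, bigG_ιMulti, map_finsuppSum]
  refine Finsupp.sum_congr fun g _ => ?_
  rw [map_smul, consLift_ιMulti]
  congr 1
  rw [Fin.comp_cons]
  rfl

theorem bigD_cons (x : MonoidAlgebra ℂ (Equiv.Perm (Fin n))) {m : ℕ} (u : Fin m → sumZero n) :
    bigD ℂ (permRep n) x (ιMulti ℂ (m + 1) (Fin.cons (allOnes n) fun i => (u i : Fin n → ℂ)))
      = (Finsupp.sum x.coeff fun _ a => a) •
          ιMulti ℂ (m + 1) (Fin.cons (allOnes n) fun i => (u i : Fin n → ℂ))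
        + consLift n (bigD ℂ (reflRep n) x (ιMulti ℂ m u)) := by
  rw [bigD_ιMulti, bigD_ιMulti]
  have key : ∀ g : Equiv.Perm (Fin n),
      (∑ p : Fin (m + 1), ιMulti ℂ (m + 1)
        (Function.update (Fin.cons (allOnes n) (fun i => (u i : Fin n → ℂ)) : Fin (m + 1) → Fin n → ℂ) p
          (permRep n g ((Fin.cons (allOnes n) (fun i => (u i : Fin n → ℂ)) : Fin (m + 1) → Fin n → ℂ) p))))
      = ιMulti ℂ (m + 1) (Fin.cons (allOnes n) fun i => (u i : Fin n → ℂ))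
        + consLift n (∑ p : Fin m, ιMulti ℂ m (Function.update u p (reflRep n g (u p)))) := by
    intro g
    rw [Fin.sum_univ_succ, map_sum]
    congr 1
    · have h0 : permRep n g ((Fin.cons (allOnes n) (fun i => (u i : Fin n → ℂ)) : Fin (m + 1) → Fin n → ℂ) 0)
          = (Fin.cons (allOnes n) (fun i => (u i : Fin n → ℂ)) : Fin (m + 1) → Fin n → ℂ) 0 := permRep_allOnes n g
      rw [h0, Function.update_eq_self]
    · refine Finset.sum_congr rfl fun p _ => ?_
      rw [consLift_ιMulti, coe_update]
      have h1 : (Fin.cons (allOnes n) (fun i => (u i : Fin n → ℂ)) : Fin (m + 1) → Fin n → ℂ) p.succ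
          = ((u p : sumZero n) : Fin n → ℂ) := Fin.cons_succ _ _ _
      rw [h1, ← Fin.cons_update]
      rfl
  calc (Finsupp.sum x.coeff fun g a => a • ∑ p : Fin (m + 1), ιMulti ℂ (m + 1)
        (Function.update (Fin.cons (allOnes n) (fun i => (u i : Fin n → ℂ)) : Fin (m + 1) → Fin n → ℂ) p
          (permRep n g ((Fin.cons (allOnes n) (fun i => (u i : Fin n → ℂ)) : Fin (m + 1) → Fin n → ℂ) p))))
      = Finsupp.sum x.coeff fun g a =>
          (a • ιMulti ℂ (m + 1) (Fin.cons (allOnes n) fun i => (u i : Fin n → ℂ))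
          + a • consLift n (∑ p : Fin m, ιMulti ℂ m
              (Function.update u p (reflRep n g (u p))))) := by
        refine Finsupp.sum_congr fun g _ => ?_
        rw [key g, smul_add]
    _ = _ := by
        rw [Finsupp.sum_add]
        congr 1
        · rw [Finsupp.sum, Finsupp.sum, Finset.sum_smul]
        · rw [map_finsuppSum]
          exact Finsupp.sum_congr fun g _ => (map_smul _ _ _).symm

theorem decomp (hn : 1 ≤ n) {m : ℕ} (w : Fin m → (Fin n → ℂ)) :
    ∃ (c : Finset (Fin m) → ℂ) (u : Fin m → (Fin n → ℂ)), (∀ i, u i ∈ sumZero n) ∧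
      ExteriorAlgebra.ιMulti ℂ m w = ∑ s : Finset (Fin m),
        c s • ExteriorAlgebra.ιMulti ℂ m (s.piecewise (fun _ => allOnes n) u) := by
  have hne : (n : ℂ) ≠ 0 := Nat.cast_ne_zero.mpr (by omega)
  set c0 : Fin m → ℂ := fun i => (∑ j, w i j) / n with hc0
  set u : Fin m → (Fin n → ℂ) := fun i => w i - c0 i • allOnes n with hu0
  have hu : ∀ i, u i ∈ sumZero n := by
    intro i
    rw [mem_sumZero]
    have h1 : ∑ j, u i j = (∑ j, w i j) - n * c0 i := by
      rw [hu0]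
      simp only [Pi.sub_apply, Pi.smul_apply, smul_eq_mul, allOnes, mul_one,
        Finset.sum_sub_distrib, Finset.sum_const, Finset.card_univ, Fintype.card_fin,
        nsmul_eq_mul]
    rw [h1, hc0]
    field_simp
    ring
  have hw : w = (fun i => c0 i • allOnes n) + u := by
    funext i
    show w i = c0 i • allOnes n + (w i - c0 i • allOnes n)
    rw [add_comm, sub_add_cancel]
  refine ⟨fun s => ∏ i ∈ s, c0 i, u, hu, ?_⟩
  rw [hw]
  have h1 := (ExteriorAlgebra.ιMulti ℂ m).toMultilinearMap.map_add_univ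
    (fun i => c0 i • allOnes n) u
  refine Eq.trans h1 ?_
  refine Finset.sum_congr rfl fun s _ => ?_
  have h2 := (ExteriorAlgebra.ιMulti ℂ m).toMultilinearMap.map_piecewise_smul c0
    (s.piecewise (fun _ => allOnes n) u) s
  have h3 : s.piecewise (fun i => c0 i • (s.piecewise (fun _ => allOnes n) u) i)
      (s.piecewise (fun _ => allOnes n) u) = s.piecewise (fun i => c0 i • allOnes n) u := by
    funext i
    by_cases hi : i ∈ s
    · rw [Finset.piecewise_eq_of_mem _ _ _ hi, Finset.piecewise_eq_of_mem _ _ _ hi,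
        Finset.piecewise_eq_of_mem _ _ _ hi]
    · rw [Finset.piecewise_eq_of_notMem _ _ _ hi, Finset.piecewise_eq_of_notMem _ _ _ hi,
        Finset.piecewise_eq_of_notMem _ _ _ hi]
  rw [← h3, h2]
  rfl

end AuxN
/-- `Lie(ℂ^n) = Lie(V)`: an element of `ℂ[S_n]` is a Lie element for the permutation
representation `ℂ^n` (conditions for all `m ≤ n`) iff it is one for the reflection
representation `V` (conditions for all `m ≤ n − 1`). -/
theorem isLieElement_permRep_iff_reflRep {n : ℕ} (x : MonoidAlgebra ℂ (Equiv.Perm (Fin n))) :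
    (∀ m ≤ n, GrpOp ℂ (permRep n) m x = AlgOp ℂ (permRep n) m x) ↔
      (∀ m ≤ n - 1, GrpOp ℂ (reflRep n) m x = AlgOp ℂ (reflRep n) m x) := by
  constructor
  · intro hC m hm
    rw [cond_iff]
    intro z hz
    rw [← ExteriorAlgebra.ιMulti_span_fixedDegree] at hz
    induction hz using Submodule.span_induction with
    | mem z hzm =>
        obtain ⟨u, rfl⟩ := hzm
        apply inclMap_inj n
        rw [← bigG_incl, ← bigD_incl]
        exact (cond_iff ℂ (permRep n) m x).mp (hC m (le_trans hm (Nat.sub_le n 1))) _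
          (ιMulti_mem ℂ m _)
    | zero => simp
    | add a b _ _ ha hb => rw [map_add, map_add, ha, hb]
    | smul c a _ ha => rw [map_smul, map_smul, ha]
  · intro hV m hm
    have hsum : (Finsupp.sum x.coeff fun _ a => a) = 0 :=
      (cond_zero_iff ℂ (reflRep n) x).mp (hV 0 (Nat.zero_le _))
    have hVh : ∀ m' ≤ n - 1, ∀ u : Fin m' → sumZero n,
        bigG ℂ (reflRep n) x (ExteriorAlgebra.ιMulti ℂ m' u)
          = bigD ℂ (reflRep n) x (ExteriorAlgebra.ιMulti ℂ m' u) := fun m' hm' u =>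
      (cond_iff ℂ (reflRep n) m' x).mp (hV m' hm') _ (ιMulti_mem ℂ m' u)
    have keyA : ∀ m'' ≤ n, ∀ u : Fin m'' → sumZero n,
        bigG ℂ (permRep n) x (ExteriorAlgebra.ιMulti ℂ m'' fun i => (u i : Fin n → ℂ))
          = bigD ℂ (permRep n) x (ExteriorAlgebra.ιMulti ℂ m'' fun i => (u i : Fin n → ℂ)) := by
      intro m'' hm'' u
      by_cases hm3 : m'' ≤ n - 1
      · rw [bigG_incl, bigD_incl]
        exact congrArg (inclMap n) (hVh m'' hm3 u)
      · have h1 : m'' = n := by omega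
        have hn : 1 ≤ n := by omega
        have h0 : ExteriorAlgebra.ιMulti ℂ m'' (fun i => (u i : Fin n → ℂ)) = 0 := by
          rw [← inclMap_ιMulti, ιMulti_top_deg n hn h1.ge u, map_zero]
        rw [h0, map_zero, map_zero]
    have keyB : ∀ m'', m'' + 1 ≤ n → ∀ u : Fin m'' → sumZero n,
        bigG ℂ (permRep n) x (ExteriorAlgebra.ιMulti ℂ (m'' + 1)
            (Fin.cons (allOnes n) fun i => (u i : Fin n → ℂ)))
          = bigD ℂ (permRep n) x (ExteriorAlgebra.ιMulti ℂ (m'' + 1)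
            (Fin.cons (allOnes n) fun i => (u i : Fin n → ℂ))) := by
      intro m'' hm'' u
      rw [bigG_cons, bigD_cons, hsum, zero_smul, zero_add]
      exact congrArg (consLift n) (hVh m'' (by omega) u)
    rw [cond_iff]
    intro z hz
    rw [← ExteriorAlgebra.ιMulti_span_fixedDegree] at hz
    induction hz using Submodule.span_induction with
    | mem z hzm =>
        obtain ⟨w, rfl⟩ := hzm
        rcases Nat.eq_zero_or_pos m with rfl | hmpos
        · rw [bigG_degZero, bigD_degZero, hsum, zero_smul]
        · have hn : 1 ≤ n := by omega
          obtain ⟨c, u, hu, hrep⟩ := decomp n hn w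
          rw [hrep, map_sum, map_sum]
          refine Finset.sum_congr rfl fun s _ => ?_
          rw [map_smul, map_smul]
          congr 1
          rcases Finset.eq_empty_or_nonempty s with rfl | ⟨j, hj⟩
          · rw [Finset.piecewise_empty]
            exact keyA m hm (fun i => ⟨u i, hu i⟩)
          · by_cases hsing : s = {j}
            · subst hsing
              rw [Finset.piecewise_singleton]
              obtain ⟨m', rfl⟩ : ∃ m', m = m' + 1 := ⟨m - 1, by omega⟩
              set τ : Equiv.Perm (Fin (m' + 1)) := Equiv.swap 0 j with hτ
              set v : Fin (m' + 1) → (Fin n → ℂ) := Function.update u j (allOnes n) with hv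
              have hne0 : ∀ i : Fin m', τ i.succ ≠ j := by
                intro i h
                exact Fin.succ_ne_zero i (τ.injective (h.trans (Equiv.swap_apply_left 0 j).symm))
              set u'' : Fin m' → sumZero n := fun i => ⟨v (τ i.succ), by
                rw [hv, Function.update_of_ne (hne0 i)]; exact hu _⟩ with hu''
              have hcons : v ∘ τ = Fin.cons (allOnes n) (fun i => (u'' i : Fin n → ℂ)) := by
                funext i
                refine Fin.cases ?_ (fun i => ?_) i
                · show v (τ 0) = (Fin.cons (allOnes n) (fun i => (u'' i : Fin n → ℂ))
                      : Fin (m' + 1) → Fin n → ℂ) 0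
                  rw [Fin.cons_zero, show τ 0 = j from Equiv.swap_apply_left 0 j, hv,
                    Function.update_self]
                · show v (τ i.succ) = (Fin.cons (allOnes n) (fun i => (u'' i : Fin n → ℂ))
                      : Fin (m' + 1) → Fin n → ℂ) i.succ
                  rw [Fin.cons_succ]
              have hperm := (ExteriorAlgebra.ιMulti ℂ (m' + 1)).map_congr_perm v τ
              have core := keyB m' hm u''
              rw [← hcons] at core
              rcases Int.units_eq_one_or (Equiv.Perm.sign τ) with hs | hs <;> rw [hs] at hperm
              · rw [one_smul] at hperm
                rw [hperm]
                exact core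
              · rw [Units.neg_smul, one_smul] at hperm
                rw [hperm, map_neg, map_neg, core]
            · obtain ⟨j', hj', hjj⟩ : ∃ j' ∈ s, j' ≠ j := by
                by_contra hc
                push_neg at hc
                exact hsing (Finset.eq_singleton_iff_unique_mem.mpr ⟨hj, hc⟩)
              have h0 : ExteriorAlgebra.ιMulti ℂ m (s.piecewise (fun _ => allOnes n) u) = 0 :=
                (ExteriorAlgebra.ιMulti ℂ m).map_eq_zero_of_eq _
                  (by rw [Finset.piecewise_eq_of_mem _ _ _ hj',
                    Finset.piecewise_eq_of_mem _ _ _ hj]) hjj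
              rw [h0, map_zero, map_zero]
    | zero => simp
    | add a b _ _ ha hb => rw [map_add, map_add, ha, hb]
    | smul cc a _ ha => rw [map_smul, map_smul, ha]
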